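/- Let κ > 0. With h_x = (6−κ)/(2κ), h_y = (κ−2)/(2κ) and Z(x,y) = (x−y)^{−2/κ} on {(x,y) ∈ ℝ² : x > y}, one has (x² ∂/∂x + y² ∂/∂y + 2x h_x + 2y h_y) Z = ((4−κ)/κ)·(x−y)^{1−2/κ}, and this function W(x,y) = ((4−κ)/κ)(x−y)^{1−2/κ} satisfies (∂/∂x + ∂/∂y) W = 0. In particular, for κ ≠ 4, the highest weight module generated by the SLE_κ(ρ=−2) partition function Z contains a nonzero singular vector L₋₁Z at grade one. -/

import Mathlib

/-- The SLE_κ(ρ=-2) partition function. -/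
noncomputable def Z6 (κ x y : ℝ) : ℝ := (x - y) ^ (-2 / κ)

/-- The grade-one singular vector `L₋₁ Z`. -/
noncomputable def W6 (κ x y : ℝ) : ℝ := (4 - κ) / κ * (x - y) ^ (1 - 2 / κ)

lemma deriv_x_rpow (p x y : ℝ) (h : y < x) :
    deriv (fun x' => (x' - y) ^ p) x = p * (x - y) ^ (p - 1) := by
  have h1 : HasDerivAt (fun x' : ℝ => x' - y) 1 x := (hasDerivAt_id x).sub_const y
  have h2 := (Real.hasDerivAt_rpow_const (x := x - y) (p := p)
    (Or.inl (by linarith : x - y ≠ 0))).comp x h1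
  simpa [Function.comp_def] using h2.deriv

lemma deriv_y_rpow (p x y : ℝ) (h : y < x) :
    deriv (fun y' => (x - y') ^ p) y = -(p * (x - y) ^ (p - 1)) := by
  have h1 : HasDerivAt (fun y' : ℝ => x - y') (-1) y := (hasDerivAt_id y).const_sub x
  have h2 := (Real.hasDerivAt_rpow_const (x := x - y) (p := p)
    (Or.inl (by linarith : x - y ≠ 0))).comp y h1
  simpa [Function.comp_def] using h2.deriv

/-- With `h_x = (6-κ)/(2κ)`, `h_y = (κ-2)/(2κ)` one has
`L₋₁ Z = ((4-κ)/κ)(x-y)^{1-2/κ} = W`, `L₁ W = 0`, and for `κ ≠ 4` the singular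
vector `W = L₋₁ Z` is nonzero. -/
theorem stmt_6 (κ : ℝ) (hκ : 0 < κ) :
    (∀ x y : ℝ, y < x →
        x ^ 2 * deriv (fun x' => Z6 κ x' y) x + y ^ 2 * deriv (fun y' => Z6 κ x y') y
            + 2 * x * ((6 - κ) / (2 * κ)) * Z6 κ x y
            + 2 * y * ((κ - 2) / (2 * κ)) * Z6 κ x y
          = W6 κ x y)
    ∧ (∀ x y : ℝ, y < x →
        deriv (fun x' => W6 κ x' y) x + deriv (fun y' => W6 κ x y') y = 0)
    ∧ (κ ≠ 4 → ∃ x y : ℝ, y < x ∧ W6 κ x y ≠ 0) := by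
  refine ⟨?_, ?_, ?_⟩
  · intro x y h
    have ht : (0:ℝ) < x - y := by linarith
    simp only [Z6, W6, deriv_x_rpow _ _ _ h, deriv_y_rpow _ _ _ h]
    have e1 : (x - y) ^ (-2/κ - 1) = (x - y) ^ (-2/κ) / (x - y) :=
      Real.rpow_sub_one ht.ne' _
    have e2 : (x - y) ^ (1 - 2/κ) = (x - y) ^ (-2/κ) * (x - y) := by
      rw [show (1 - 2/κ) = (-2/κ) + 1 by ring, Real.rpow_add_one ht.ne']
    rw [e1, e2]
    field_simp
    ring
  · intro x y h
    simp only [W6]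
    rw [show (fun x' => (4 - κ) / κ * (x' - y) ^ (1 - 2/κ))
        = (fun x' => (4 - κ) / κ * (fun x' => (x' - y) ^ (1 - 2/κ)) x') from rfl,
      deriv_const_mul _ ?dx,
      show (fun y' => (4 - κ) / κ * (x - y') ^ (1 - 2/κ))
        = (fun y' => (4 - κ) / κ * (fun y' => (x - y') ^ (1 - 2/κ)) y') from rfl,
      deriv_const_mul _ ?dy, deriv_x_rpow _ _ _ h, deriv_y_rpow _ _ _ h]
    · ring
    case dx =>
      exact (((hasDerivAt_id x).sub_const y).rpow_const
        (Or.inl (by linarith : x - y ≠ 0))).differentiableAt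
    case dy =>
      exact (((hasDerivAt_id y).const_sub x).rpow_const
        (Or.inl (by linarith : x - y ≠ 0))).differentiableAt
  · intro h4
    refine ⟨1, 0, one_pos, ?_⟩
    simp only [W6, sub_zero, Real.one_rpow, mul_one]
    exact div_ne_zero (by intro h; apply h4; linarith) hκ.ne'
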